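/- Fix β > 0 and for small x > 0 let t(x) denote the unique large solution of t^β e^{−t} = x. Then there exist constants M > 0 and x₀ ∈ (0,1) such that for all 0 < x < x₀, |t(x) + log(x/β^β) − β log|log(x^{1/β}/β)| − β² log|log(x^{1/β}/β)| / log(β^β/x)| ≤ M (log|log(x^{1/β}/β)| / log(β^β/x))². -/

import Mathlib

open Filter Set

private lemma log_one_add_lb (d : ℝ) (hd : 0 ≤ d) : d - d ^ 2 ≤ Real.log (1 + d) := by
  have h1 : (0:ℝ) < 1 + d := by linarith
  have h2 := Real.log_le_sub_one_of_pos (show (0:ℝ) < 1 / (1 + d) by positivity)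
  rw [Real.log_div one_ne_zero (by positivity), Real.log_one] at h2
  have h4 : d - d ^ 2 ≤ d / (1 + d) := by
    rw [le_div_iff₀ h1]; nlinarith
  have h5 : 1 / (1 + d) - 1 = -(d / (1 + d)) := by field_simp; ring
  rw [h5] at h2
  linarith

set_option maxHeartbeats 1000000 in
theorem stmt_11 (β : ℝ) (hβ : 0 < β) (t : ℝ → ℝ)
    (ht : ∀ᶠ x in nhdsWithin (0 : ℝ) (Set.Ioi 0),
      β ≤ t x ∧ t x ^ β * Real.exp (-t x) = x) :
    ∃ M > (0 : ℝ), ∃ x₀ ∈ Set.Ioo (0 : ℝ) 1, ∀ x : ℝ, 0 < x → x < x₀ →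
      |t x + Real.log (x / β ^ β)
          - β * Real.log |Real.log (x ^ (1 / β) / β)|
          - β ^ 2 * Real.log |Real.log (x ^ (1 / β) / β)| / Real.log (β ^ β / x)|
        ≤ M * (Real.log |Real.log (x ^ (1 / β) / β)| / Real.log (β ^ β / x)) ^ 2 := by
  -- L(x) := log (β^β / x) tends to +∞ as x → 0⁺
  have hLtop : Tendsto (fun x => Real.log (β ^ β / x)) (nhdsWithin 0 (Set.Ioi 0)) atTop := by
    have hcongr : ∀ᶠ x in nhdsWithin (0:ℝ) (Set.Ioi 0),
        Real.log (β ^ β) + -Real.log x = Real.log (β ^ β / x) := by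
      filter_upwards [self_mem_nhdsWithin] with x hx
      rw [Real.log_div (Real.rpow_pos_of_pos hβ β).ne' (ne_of_gt hx)]; ring
    apply Tendsto.congr' hcongr
    exact tendsto_atTop_add_const_left _ _
      (Filter.tendsto_neg_atTop_iff.mpr Real.tendsto_log_nhdsGT_zero)
  -- conditions along atTop (in the variable L)
  have hA : ∀ᶠ L in (atTop : Filter ℝ), max 1 (32 * β) ≤ L := eventually_ge_atTop _
  have hB : ∀ᶠ L in (atTop : Filter ℝ), 1 ≤ Real.log (L / β) := by
    have h : Tendsto (fun L : ℝ => Real.log (L / β)) atTop atTop :=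
      Real.tendsto_log_atTop.comp (tendsto_id.atTop_div_const hβ)
    exact h.eventually_ge_atTop 1
  have hC : ∀ᶠ L in (atTop : Filter ℝ), 4 * β * Real.log (L / β) / L ≤ 1 / 2 := by
    have h0 : Tendsto (fun L : ℝ => Real.log L / L) atTop (nhds 0) :=
      Real.isLittleO_log_id_atTop.tendsto_div_nhds_zero
    have h1 : Tendsto (fun L : ℝ => Real.log β / L) atTop (nhds 0) :=
      tendsto_const_nhds.div_atTop tendsto_id
    have h2 : Tendsto (fun L : ℝ => 4 * β * (Real.log L / L - Real.log β / L)) atTop (nhds 0) := by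
      have := (h0.sub h1).const_mul (4 * β)
      simpa using this
    have h3 : ∀ᶠ L in (atTop : Filter ℝ),
        4 * β * (Real.log L / L - Real.log β / L) = 4 * β * Real.log (L / β) / L := by
      filter_upwards [eventually_gt_atTop (0:ℝ)] with L hL
      rw [Real.log_div (ne_of_gt hL) (ne_of_gt hβ)]; ring
    have h4 : ∀ᶠ L in (atTop : Filter ℝ),
        4 * β * (Real.log L / L - Real.log β / L) ≤ 1 / 2 :=
      h2.eventually_le_const (by norm_num)
    filter_upwards [h3, h4] with L e1 e2
    rw [← e1]; exact e2
  have hcond := hLtop.eventually (hA.and (hB.and hC))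
  have hall := ht.and hcond
  rw [Filter.eventually_iff, mem_nhdsGT_iff_exists_Ioo_subset] at hall
  obtain ⟨u, hu, hsub⟩ := hall
  have hu' : (0:ℝ) < u := hu
  have hmin : (0:ℝ) < min u 1 := lt_min hu' one_pos
  have hmin1 : min u 1 ≤ 1 := min_le_right _ _
  refine ⟨4 * β ^ 3 + 1, by positivity, min u 1 / 2,
    ⟨by linarith, by linarith⟩, ?_⟩
  intro x hx0 hxu
  have hxmem : x ∈ Set.Ioo (0:ℝ) u := by
    constructor
    · exact hx0
    · have h1 : min u 1 / 2 < min u 1 := by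
        have : 0 < min u 1 := lt_min hu one_pos
        linarith
      calc x < min u 1 / 2 := hxu
        _ < min u 1 := h1
        _ ≤ u := min_le_left _ _
  obtain ⟨⟨hβt, heq⟩, hmax, hℓ1, hδ2⟩ := hsub hxmem
  set L := Real.log (β ^ β / x) with hLdef
  set ℓ := Real.log (L / β) with hℓdef
  have hL1 : 1 ≤ L := le_trans (le_max_left _ _) hmax
  have hLβ : 32 * β ≤ L := le_trans (le_max_right _ _) hmax
  have hL0 : (0:ℝ) < L := by linarith
  have ht0 : 0 < t x := lt_of_lt_of_le hβ hβt
  -- logarithm of the equation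
  have hlogeq : β * Real.log (t x) + -t x = Real.log x := by
    have h := congrArg Real.log heq
    rw [Real.log_mul (Real.rpow_pos_of_pos ht0 β).ne' (Real.exp_ne_zero _),
      Real.log_rpow ht0, Real.log_exp] at h
    linarith [h]
  have hLx : L = β * Real.log β - Real.log x := by
    rw [hLdef, Real.log_div (Real.rpow_pos_of_pos hβ β).ne' (ne_of_gt hx0), Real.log_rpow hβ]
  -- the key fixed point identity
  have key : t x = L + β * Real.log (t x / β) := by
    have h1 : Real.log (t x / β) = Real.log (t x) - Real.log β :=
      Real.log_div (ne_of_gt ht0) (ne_of_gt hβ)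
    have h2 : β * (Real.log (t x) - Real.log β) = β * Real.log (t x) - β * Real.log β := by ring
    rw [h1, h2, hLx]; linarith
  have hts : 1 ≤ t x / β := (one_le_div hβ).mpr hβt
  have hlognn : 0 ≤ Real.log (t x / β) := Real.log_nonneg hts
  have htL : L ≤ t x := by nlinarith [mul_nonneg hβ.le hlognn]
  -- upper bound t ≤ 4 L
  have hsq : Real.log (t x / β) ≤ 2 * Real.sqrt (t x / β) := by
    have h0 : (0:ℝ) ≤ t x / β := by positivity
    have h1 : Real.log (Real.sqrt (t x / β)) = Real.log (t x / β) / 2 := Real.log_sqrt h0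
    have h2 := Real.log_le_sub_one_of_pos (show (0:ℝ) < Real.sqrt (t x / β) by positivity)
    have h3 : (0:ℝ) ≤ Real.sqrt (t x / β) := Real.sqrt_nonneg _
    linarith
  have ht4L : t x ≤ 4 * L := by
    have hsplit : Real.sqrt (t x / β) = Real.sqrt (t x) / Real.sqrt β := Real.sqrt_div ht0.le β
    have hst : Real.sqrt (t x) * Real.sqrt (t x) = t x := Real.mul_self_sqrt ht0.le
    have hsβ : Real.sqrt β * Real.sqrt β = β := Real.mul_self_sqrt hβ.le
    have hsβ0 : 0 < Real.sqrt β := Real.sqrt_pos.mpr hβ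
    have h5 : β * Real.log (t x / β) ≤ 2 * Real.sqrt β * Real.sqrt (t x) := by
      have h6 : β * Real.log (t x / β) ≤ β * (2 * (Real.sqrt (t x) / Real.sqrt β)) := by
        rw [hsplit] at hsq
        exact mul_le_mul_of_nonneg_left hsq hβ.le
      have hdiv : β / Real.sqrt β = Real.sqrt β := by
        rw [eq_comm, eq_div_iff hsβ0.ne', hsβ]
      have h7 : β * (2 * (Real.sqrt (t x) / Real.sqrt β)) = 2 * Real.sqrt β * Real.sqrt (t x) := by
        calc β * (2 * (Real.sqrt (t x) / Real.sqrt β))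
            = 2 * Real.sqrt (t x) * (β / Real.sqrt β) := by ring
          _ = 2 * Real.sqrt β * Real.sqrt (t x) := by rw [hdiv]; ring
      linarith [h7 ▸ h6]
    -- 2 √β √t ≤ t/2 + 2β
    have h8 : 2 * Real.sqrt β * Real.sqrt (t x) ≤ t x / 2 + 2 * β := by
      nlinarith [sq_nonneg (Real.sqrt (t x) - 2 * Real.sqrt β)]
    nlinarith
  -- s = β log(t/L)
  set lg := Real.log (t x / L) with hlgdef
  have hsdef : t x - L - β * ℓ = β * lg := by
    have h1 : lg = Real.log (t x / β) - Real.log (L / β) := by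
      rw [hlgdef, Real.log_div (ne_of_gt ht0) (ne_of_gt hL0),
        Real.log_div (ne_of_gt ht0) (ne_of_gt hβ), Real.log_div (ne_of_gt hL0) (ne_of_gt hβ)]
      ring
    have h2 : β * (Real.log (t x / β) - Real.log (L / β)) =
        β * Real.log (t x / β) - β * Real.log (L / β) := by ring
    rw [h1, h2, ← hℓdef]; linarith
  set d := t x / L - 1 with hddef
  have hd0 : 0 ≤ d := by
    rw [hddef, sub_nonneg, le_div_iff₀ hL0, one_mul]; exact htL
  have h1d : 1 + d = t x / L := by rw [hddef]; ring
  have hdL : d * L = t x - L := by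
    rw [hddef, sub_mul, one_mul, div_mul_cancel₀ _ (ne_of_gt hL0)]
  have hlg_le : lg ≤ d := by
    have := Real.log_le_sub_one_of_pos (show (0:ℝ) < t x / L by positivity)
    rw [hlgdef]; rw [hddef]; linarith
  have hlg_ge : d - d ^ 2 ≤ lg := by
    have := log_one_add_lb d hd0
    rw [h1d] at this; exact this
  have hlg0 : 0 ≤ lg := Real.log_nonneg ((one_le_div hL0).mpr htL)
  -- d L = β ℓ + β lg
  have hdLs : d * L = β * ℓ + β * lg := by rw [hdL]; linarith [hsdef]
  have hℓ0 : (0:ℝ) < ℓ := by linarith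
  set r := ℓ / L with hrdef
  have hr0 : 0 < r := hrdef ▸ div_pos hℓ0 hL0
  have hr1 : 1 / L ≤ r := by
    rw [hrdef]; exact div_le_div_of_nonneg_right hℓ1 hL0.le
  have h4βr : 4 * β * r ≤ 1 / 2 := by
    rw [hrdef, ← mul_div_assoc]; exact hδ2
  clear_value r d lg ℓ L
  -- d ≤ 2 β r
  have hd2 : d ≤ 2 * β * r := by
    have hβlg : β * lg ≤ β * d := mul_le_mul_of_nonneg_left hlg_le hβ.le
    have hdβ : d * β ≤ d * (L / 32) := mul_le_mul_of_nonneg_left (by linarith) hd0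
    -- d*L ≤ βℓ + βd and βd = d*β ≤ d*L/32 ⇒ (31/32) d L ≤ βℓ
    have h9 : d * L ≤ β * ℓ + d * (L / 32) := by linarith
    have h10 : d * L ≤ (32 / 31) * (β * ℓ) := by linarith
    rw [hrdef]
    rw [show 2 * β * (ℓ / L) = (2 * β * ℓ) / L by ring, le_div_iff₀ hL0]
    linarith [mul_nonneg hβ.le hℓ0.le]
  -- main estimates
  have hAeq : t x - L - β * ℓ - β ^ 2 * ℓ / L = β * lg - β * d + β ^ 2 * lg / L := by
    have h11 : β ^ 2 * ℓ / L = β * d - β ^ 2 * lg / L := by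
      rw [div_eq_iff (ne_of_gt hL0), sub_mul, div_mul_cancel₀ _ (ne_of_gt hL0)]
      linear_combination (-β) * hdLs
    rw [h11]; linarith [hsdef]
  have hdr2 : d ^ 2 ≤ 4 * β ^ 2 * r ^ 2 := by
    nlinarith [mul_le_mul hd2 hd2 hd0 (by positivity : (0:ℝ) ≤ 2 * β * r)]
  have hupper : β ^ 2 * lg / L ≤ 2 * β ^ 3 * r ^ 2 := by
    have e1 : lg / L ≤ d * r := by
      calc lg / L ≤ d / L := div_le_div_of_nonneg_right hlg_le hL0.le
        _ = d * (1 / L) := by ring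
        _ ≤ d * r := mul_le_mul_of_nonneg_left hr1 hd0
    have e2 : d * r ≤ 2 * β * r * r := mul_le_mul_of_nonneg_right hd2 hr0.le
    have e4 := mul_le_mul_of_nonneg_left (e1.trans e2) (sq_nonneg β)
    calc β ^ 2 * lg / L = β ^ 2 * (lg / L) := by ring
      _ ≤ β ^ 2 * (2 * β * r * r) := e4
      _ = 2 * β ^ 3 * r ^ 2 := by ring
  -- rewrite the goal
  have hxlog : Real.log (x ^ (1 / β) / β) = -(L / β) := by
    rw [Real.log_div (Real.rpow_pos_of_pos hx0 _).ne' (ne_of_gt hβ), Real.log_rpow hx0, hLx]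
    field_simp
    try ring
  have habs : |Real.log (x ^ (1 / β) / β)| = L / β := by
    rw [hxlog, abs_neg, abs_of_pos (by positivity)]
  have hℓeq : Real.log |Real.log (x ^ (1 / β) / β)| = ℓ := by rw [habs, hℓdef]
  have hxβ : Real.log (x / β ^ β) = -L := by
    rw [Real.log_div (ne_of_gt hx0) (Real.rpow_pos_of_pos hβ β).ne', Real.log_rpow hβ, hLx]
    ring
  rw [hℓeq, hxβ]
  have hgoal_eq : t x + -L - β * ℓ - β ^ 2 * ℓ / L = β * lg - β * d + β ^ 2 * lg / L := by
    rw [← hAeq]; ring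
  rw [hgoal_eq]
  rw [abs_le]
  constructor
  · -- lower bound: -(M r²) ≤ β lg - β d + β² lg / L
    have l1 : β * (d - d ^ 2) ≤ β * lg := mul_le_mul_of_nonneg_left hlg_ge hβ.le
    have l2 : 0 ≤ β ^ 2 * lg / L := by positivity
    have l3 : β * d ^ 2 ≤ 4 * β ^ 3 * r ^ 2 := by
      have := mul_le_mul_of_nonneg_left hdr2 hβ.le
      linarith only [this]
    have l4 : 0 ≤ r ^ 2 := sq_nonneg r
    rw [← hrdef]
    linarith only [l1, l2, l3, l4]
  · have u1 : β * lg ≤ β * d := mul_le_mul_of_nonneg_left hlg_le hβ.le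
    have u2 : 0 ≤ r ^ 2 := sq_nonneg r
    have u3 : 0 ≤ β ^ 3 * r ^ 2 := by positivity
    rw [← hrdef]
    linarith only [u1, u2, u3, hupper]
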